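/- Let G be a finite abelian group and H ≤ G a subgroup with exp(G) = exp(H)·exp(G/H). Then s(G) ≤ exp(G/H)·(s(H) - 1) + s(G/H). -/

import Mathlib

open Multiset

/-- The Erdős–Ginzburg–Ziv constant of a finite abelian group `A`. -/
noncomputable def EGZ (A : Type*) [AddCommMonoid A] : ℕ :=
  sInf {ℓ | ∀ S : Multiset A, ℓ ≤ Multiset.card S →
    ∃ T ≤ S, Multiset.card T = AddMonoid.exponent A ∧ T.sum = 0}

/-- Lifting sub-multisets through `map`. -/
theorem exists_le_of_le_map' {α β : Type*} {f : α → β} {s : Multiset α} {t : Multiset β}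
    (h : t ≤ s.map f) : ∃ u ≤ s, u.map f = t := by
  classical
  induction t using Multiset.induction_on generalizing s with
  | empty => exact ⟨0, Multiset.zero_le s, rfl⟩
  | cons a t ih =>
    have ha : a ∈ s.map f := mem_of_le h (mem_cons_self a t)
    obtain ⟨x, hx, rfl⟩ := mem_map.1 ha
    have ht : t ≤ (s.erase x).map f := by
      rw [map_erase_of_mem _ _ hx]
      have := erase_le_erase (f x) h
      simpa using this
    obtain ⟨u, hu, rfl⟩ := ih ht
    refine ⟨x ::ₘ u, ?_, by simp⟩
    calc x ::ₘ u ≤ x ::ₘ s.erase x := cons_le_cons x hu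
      _ = s := cons_erase hx

theorem sum_sum_eq {G : Type*} [AddCommMonoid G] (C : Multiset (Multiset G)) :
    C.sum.sum = (C.map Multiset.sum).sum := by
  induction C using Multiset.induction_on with
  | empty => simp
  | cons a C ih => simp [ih]

theorem msum_mono {α : Type*} {s t : Multiset (Multiset α)} (h : s ≤ t) : s.sum ≤ t.sum := by
  obtain ⟨u, rfl⟩ := Multiset.le_iff_exists_add.1 h
  rw [Multiset.sum_add]
  exact le_add_right _ _

theorem card_sum_eq {G : Type*} (C : Multiset (Multiset G)) :
    Multiset.card C.sum = (C.map Multiset.card).sum := by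
  induction C using Multiset.induction_on with
  | empty => simp
  | cons a C ih => simp [ih]

/-- Every finite abelian group satisfies the defining property of its EGZ constant. -/
theorem EGZ_spec (A : Type*) [AddCommGroup A] [Finite A] :
    ∀ S : Multiset A, EGZ A ≤ Multiset.card S →
      ∃ T ≤ S, Multiset.card T = AddMonoid.exponent A ∧ T.sum = 0 := by
  classical
  cases nonempty_fintype A
  set e := AddMonoid.exponent A with he
  have hmem : (Fintype.card A * (e - 1) + 1) ∈
      {ℓ | ∀ S : Multiset A, ℓ ≤ Multiset.card S →
        ∃ T ≤ S, Multiset.card T = AddMonoid.exponent A ∧ T.sum = 0} := by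
    intro S hS
    have hcount : ∃ a : A, e ≤ S.count a := by
      by_contra hc
      push_neg at hc
      have h1 : ∀ a ∈ S.toFinset, S.count a ≤ e - 1 := fun a _ =>
        Nat.le_sub_one_of_lt (hc a)
      have h2 : Multiset.card S ≤ Fintype.card A * (e - 1) := by
        calc Multiset.card S = ∑ a ∈ S.toFinset, S.count a :=
              (Multiset.toFinset_sum_count_eq S).symm
          _ ≤ ∑ _a ∈ S.toFinset, (e - 1) := Finset.sum_le_sum h1
          _ = S.toFinset.card * (e - 1) := by rw [Finset.sum_const, smul_eq_mul]
          _ ≤ Fintype.card A * (e - 1) :=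
              Nat.mul_le_mul_right _ (Finset.card_le_univ _)
      omega
    obtain ⟨a, ha⟩ := hcount
    refine ⟨Multiset.replicate e a, Multiset.le_count_iff_replicate_le.1 ha, by simp [he], ?_⟩
    rw [Multiset.sum_replicate, he]
    exact AddMonoid.exponent_nsmul_eq_zero a
  have : EGZ A ∈ {ℓ | ∀ S : Multiset A, ℓ ≤ Multiset.card S →
      ∃ T ≤ S, Multiset.card T = AddMonoid.exponent A ∧ T.sum = 0} :=
    Nat.sInf_mem ⟨_, hmem⟩
  exact this

/-- Extraction of `k` disjoint blocks, each of length `exp (G ⧸ H)` with sum in `H`. -/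
theorem EGZ_extract (G : Type*) [AddCommGroup G] (H : AddSubgroup G)
    (PQ : ∀ S : Multiset (G ⧸ H), EGZ (G ⧸ H) ≤ Multiset.card S →
      ∃ T ≤ S, Multiset.card T = AddMonoid.exponent (G ⧸ H) ∧ T.sum = 0) :
    ∀ (k : ℕ) (S : Multiset G),
      AddMonoid.exponent (G ⧸ H) * k + EGZ (G ⧸ H) ≤
        Multiset.card S + AddMonoid.exponent (G ⧸ H) →
      ∃ B : Multiset (Multiset G), Multiset.card B = k ∧ B.sum ≤ S ∧
        ∀ b ∈ B, Multiset.card b = AddMonoid.exponent (G ⧸ H) ∧ b.sum ∈ H := by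
  classical
  intro k
  set n := AddMonoid.exponent (G ⧸ H) with hn
  induction k with
  | zero => intro S _; exact ⟨0, rfl, by simp, by simp⟩
  | succ k ih =>
    intro S hS
    rw [Nat.mul_succ] at hS
    have h1 : EGZ (G ⧸ H) ≤ Multiset.card (S.map (QuotientAddGroup.mk' H)) := by
      rw [Multiset.card_map]; omega
    obtain ⟨T, hTle, hTcard, hTsum⟩ := PQ _ h1
    obtain ⟨b, hb, rfl⟩ := exists_le_of_le_map' hTle
    rw [Multiset.card_map] at hTcard
    have hbn : Multiset.card b ≤ Multiset.card S := Multiset.card_le_card hb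
    have hbsum : b.sum ∈ H := by
      have h2 : (QuotientAddGroup.mk' H) b.sum = 0 := by
        rw [map_multiset_sum]; exact hTsum
      exact (QuotientAddGroup.eq_zero_iff _).1 h2
    obtain ⟨B, hBcard, hBle, hBprop⟩ := ih (S - b) (by
      rw [Multiset.card_sub hb, hTcard] at *
      omega)
    refine ⟨b ::ₘ B, by simp [hBcard], ?_, ?_⟩
    · rw [Multiset.sum_cons]
      exact (le_tsub_iff_left hb).1 hBle
    · intro c hc
      rcases Multiset.mem_cons.1 hc with rfl | hc
      · exact ⟨hTcard, hbsum⟩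
      · exact hBprop c hc

/-- If `H ≤ G` is a subgroup of a finite abelian group with `exp(G) = exp(H)·exp(G/H)`, then
`s(G) ≤ exp(G/H)·(s(H) - 1) + s(G/H)`. -/
theorem EGZ_subgroup_bound (G : Type*) [AddCommGroup G] [Fintype G] (H : AddSubgroup G)
    (hexp : AddMonoid.exponent G = AddMonoid.exponent H * AddMonoid.exponent (G ⧸ H)) :
    EGZ G ≤ AddMonoid.exponent (G ⧸ H) * (EGZ H - 1) + EGZ (G ⧸ H) := by
  classical
  have PH := EGZ_spec H
  have PQ := EGZ_spec (G ⧸ H)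
  apply Nat.sInf_le
  intro S hS
  set n := AddMonoid.exponent (G ⧸ H) with hn
  set m := AddMonoid.exponent H with hm
  -- extract `EGZ H` blocks
  obtain ⟨B, hBcard, hBle, hBprop⟩ := EGZ_extract G H PQ (EGZ H) S (by
    rcases Nat.eq_zero_or_pos (EGZ H) with h0 | hp
    · simp [h0] at hS ⊢; omega
    · have h1 : EGZ H = (EGZ H - 1) + 1 := (Nat.succ_pred_eq_of_pos hp).symm
      rw [h1, Nat.mul_succ]
      have := Nat.add_le_add_right hS n
      linarith)
  -- the block sums as a multiset over H
  set f : {b // b ∈ B} → H := fun b => ⟨b.1.sum, (hBprop b.1 b.2).2⟩ with hf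
  have hSH : EGZ H ≤ Multiset.card (B.attach.map f) := by
    rw [Multiset.card_map, Multiset.card_attach, hBcard]
  obtain ⟨T, hTle, hTcard, hTsum⟩ := PH _ hSH
  obtain ⟨C, hCle, hCmap⟩ := exists_le_of_le_map' hTle
  have hCcard : Multiset.card C = m := by
    rw [← hTcard, ← hCmap, Multiset.card_map]
  have hCB : C.map Subtype.val ≤ B := by
    have := Multiset.map_le_map (f := Subtype.val) hCle
    rwa [Multiset.attach_map_val] at this
  refine ⟨(C.map Subtype.val).sum, ?_, ?_, ?_⟩
  · -- it is a sub-multiset of S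
    exact le_trans (msum_mono hCB) hBle
  · -- its cardinality is exp G
    rw [card_sum_eq, Multiset.map_map]
    have heach : (C.map (fun x => Multiset.card x.1)) = Multiset.replicate m n := by
      apply Multiset.eq_replicate.2
      constructor
      · rw [Multiset.card_map, hCcard]
      · intro x hx
        obtain ⟨c, hc, rfl⟩ := Multiset.mem_map.1 hx
        exact (hBprop c.1 (Multiset.mem_of_le hCB (Multiset.mem_map.2 ⟨c, hc, rfl⟩))).1
    show (C.map (fun x => Multiset.card x.1)).sum = AddMonoid.exponent G
    rw [heach, Multiset.sum_replicate, smul_eq_mul, hexp]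
  · -- its sum is zero
    rw [sum_sum_eq, Multiset.map_map]
    have h4 : (C.map (fun x => x.1.sum)) = (C.map f).map (⇑H.subtype) := by
      rw [Multiset.map_map]; rfl
    show (C.map (fun x => x.1.sum)).sum = 0
    rw [h4, hCmap, ← map_multiset_sum H.subtype T, hTsum]
    exact _root_.map_zero _
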